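/- Let k be a commutative ring, A a k-algebra, e an idempotent of A, and Λ := eAe. For λ1, λ2 ∈ Z(Λ), the mirror-reflective algebras R(A,e,λ1) and R(A,e,λ2) are isomorphic as idealized extensions of A by Ae ⊗_Λ eA if and only if λ1 and λ2 lie in the same coset of the group Z(Λ)^× of units of Z(Λ), i.e., λ2 = λ1·u for some invertible element u ∈ Z(Λ). -/

import Mathlib

/-!
Common setup: bimodules over a ring `A`, a universal-property description of the
`A`-`A`-bimodule `Ae ⊗_{eAe} eA` (with distinguished element `u = e ⊗ e`),
a universal-property description of tensor products of bimodules over `A`,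
and the center of the corner ring `eAe`.
-/

open MulOpposite

universe u

namespace Paper

/-- A bundled `A`-`A`-bimodule, encoded via commuting left `A`- and left `Aᵐᵒᵖ`-actions. -/
structure Bimod (A : Type u) [Ring A] : Type (u + 1) where
  carrier : Type u
  [addCommGroup : AddCommGroup carrier]
  [modLeft : Module A carrier]
  [modRight : Module Aᵐᵒᵖ carrier]
  [smulComm : SMulCommClass A Aᵐᵒᵖ carrier]

attribute [instance] Bimod.addCommGroup Bimod.modLeft Bimod.modRight Bimod.smulComm

/-- A homomorphism of `A`-`A`-bimodules. -/
def IsBimodHom (A : Type u) [Ring A] {X Y : Type u} [AddCommGroup X] [AddCommGroup Y]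
    [Module A X] [Module Aᵐᵒᵖ X] [Module A Y] [Module Aᵐᵒᵖ Y] (g : X → Y) : Prop :=
  (∀ x y : X, g (x + y) = g x + g y) ∧ (∀ (a : A) (x : X), g (a • x) = a • g x) ∧
    (∀ (a : Aᵐᵒᵖ) (x : X), g (a • x) = a • g x)

variable (A : Type u) [Ring A]

/-- `(X, u)` is a model for the `A`-`A`-bimodule `Ae ⊗_{eAe} eA`, where `u` plays the
role of `e ⊗ e`.  This is expressed by the universal property: bimodule maps out of `X`
correspond exactly to elements `v` of the target with `v = e v e` and
`λ • v = v • λ` for all `λ ∈ eAe`. -/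
structure IsAeTensor (e : A) (X : Type u) [AddCommGroup X]
    [Module A X] [Module Aᵐᵒᵖ X] [SMulCommClass A Aᵐᵒᵖ X] (u : X) : Prop where
  smul_e : e • u = u
  op_smul_e : op e • u = u
  balance : ∀ a : A, (e * a * e) • u = op (e * a * e) • u
  universal : ∀ (Y : Bimod.{u} A) (v : Y.carrier), e • v = v → op e • v = v →
    (∀ a : A, (e * a * e) • v = op (e * a * e) • v) →
      ∃! g : X → Y.carrier, IsBimodHom A g ∧ g u = v

/-- The element `ae ⊗ eb` of (a model `(X, u)` of) `Ae ⊗_{eAe} eA`. -/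
def tmk (e : A) {X : Type u} [AddCommGroup X] [Module A X] [Module Aᵐᵒᵖ X]
    (u : X) (a b : A) : X :=
  (a * e) • (op (e * b) • u)

/-- `t : X → Y → Z` is biadditive, `A`-balanced and bilinear over the outer
`A`-`A`-bimodule structures. -/
def IsBalancedBiadd {X Y Z : Type u} [AddCommGroup X] [AddCommGroup Y] [AddCommGroup Z]
    [Module A X] [Module Aᵐᵒᵖ X] [Module A Y] [Module Aᵐᵒᵖ Y] [Module A Z] [Module Aᵐᵒᵖ Z]
    (t : X → Y → Z) : Prop :=
  (∀ x x' y, t (x + x') y = t x y + t x' y) ∧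
  (∀ x y y', t x (y + y') = t x y + t x y') ∧
  (∀ (a : A) x y, t (op a • x) y = t x (a • y)) ∧
  (∀ (a : A) x y, t (a • x) y = a • t x y) ∧
  (∀ (a : A) x y, t x (op a • y) = op a • t x y)

/-- `t : X → Y → T` is a model for the tensor product `X ⊗_A Y` of `A`-`A`-bimodules. -/
structure IsTensorOverA {X Y T : Type u} [AddCommGroup X] [AddCommGroup Y] [AddCommGroup T]
    [Module A X] [Module Aᵐᵒᵖ X] [Module A Y] [Module Aᵐᵒᵖ Y] [Module A T] [Module Aᵐᵒᵖ T]
    [SMulCommClass A Aᵐᵒᵖ T] (t : X → Y → T) : Prop where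
  balanced : IsBalancedBiadd A t
  universal : ∀ (Z : Bimod.{u} A) (s : X → Y → Z.carrier), IsBalancedBiadd A s →
    ∃! g : T → Z.carrier, IsBimodHom A g ∧ ∀ x y, g (t x y) = s x y

/-- The center `Z(eAe)` of the corner ring `eAe`, as a subset of `A`. -/
def centerCorner (e : A) : Set A :=
  {z | z = e * z * e ∧ ∀ a : A, z * (e * a * e) = (e * a * e) * z}

end Paper

namespace Paper

open MulOpposite

variable (k : Type u) (A : Type u) [CommRing k] [Ring A] [Algebra k A]

/-- The data exhibiting a `k`-algebra `R` as the mirror-reflective algebra `R(A, e, lam)`,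
i.e. as the idealized extension of `A` by `X = Ae ⊗_{eAe} eA` whose multiplication on the
ideal `X` is given by `ω_lam`. -/
structure MirrorData (e lam : A) (R : Type u) [Ring R] [Algebra k R] : Type (u + 1) where
  X : Type u
  [addX : AddCommGroup X]
  [modL : Module A X]
  [modR : Module Aᵐᵒᵖ X]
  [scc : SMulCommClass A Aᵐᵒᵖ X]
  u : X
  tensor : IsAeTensor A e X u
  emb : A →ₐ[k] R
  embX : X →+ R
  bij : Function.Bijective (fun p : A × X => emb p.1 + embX p.2)
  left_compat : ∀ (a : A) (x : X), emb a * embX x = embX (a • x)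
  right_compat : ∀ (a : A) (x : X), embX x * emb a = embX (op a • x)
  mul_X : ∀ b c b' c' : A,
    embX (tmk A e u b c) * embX (tmk A e u b' c') =
      embX (tmk A e u (b * e * c * b') (lam * c'))

section Aux

variable {A}

lemma bhom_zero {X Y : Type u} [AddCommGroup X] [AddCommGroup Y]
    [Module A X] [Module Aᵐᵒᵖ X] [Module A Y] [Module Aᵐᵒᵖ Y] {g : X → Y}
    (hg : IsBimodHom A g) : g 0 = 0 := by
  have h := hg.1 0 0
  rw [add_zero] at h
  exact (add_left_cancel (a := g 0) (by rw [add_zero]; exact h)).symm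

lemma bhom_neg {X Y : Type u} [AddCommGroup X] [AddCommGroup Y]
    [Module A X] [Module Aᵐᵒᵖ X] [Module A Y] [Module Aᵐᵒᵖ Y] {g : X → Y}
    (hg : IsBimodHom A g) (x : X) : g (-x) = - g x := by
  have h := hg.1 x (-x)
  rw [add_neg_cancel, bhom_zero hg] at h
  exact eq_neg_of_add_eq_zero_right h.symm

/-- `A` as an `A`-`A`-bimodule. -/
def ABimod (A : Type u) [Ring A] : Bimod A := { carrier := A }

/-- `X` itself as a bundled bimodule. -/
def selfBimod (X : Type u) [AddCommGroup X] [Module A X] [Module Aᵐᵒᵖ X]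
    [SMulCommClass A Aᵐᵒᵖ X] : Bimod A := { carrier := X }

section Corner
variable {e : A}

lemma cc_e_mul (he : IsIdempotentElem e) {z : A} (hz : z ∈ centerCorner A e) : e * z = z := by
  conv_lhs => rw [hz.1]
  rw [show e * (e * z * e) = e * z * e by rw [← mul_assoc, ← mul_assoc, he.eq]]
  exact hz.1.symm

lemma cc_mul_e (he : IsIdempotentElem e) {z : A} (hz : z ∈ centerCorner A e) : z * e = z := by
  conv_lhs => rw [hz.1]
  rw [mul_assoc (e * z) e e, he.eq]
  exact hz.1.symm

lemma cc_comm {z w : A} (hz : z ∈ centerCorner A e) (hw : w ∈ centerCorner A e) :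
    z * w = w * z := by
  conv_lhs => rw [hw.1]
  rw [hz.2 w, ← hw.1]

end Corner

section Model

variable {e : A} {X : Type u} [AddCommGroup X] [Module A X] [Module Aᵐᵒᵖ X]
  [SMulCommClass A Aᵐᵒᵖ X] {u : X}

lemma tmk_eq_smul (hu : IsAeTensor A e X u) (a b : A) :
    tmk A e u a b = a • (op b • u) := by
  unfold tmk
  have h1 : op (e * b) • u = op b • u := by
    rw [show (op (e*b) : Aᵐᵒᵖ) = op b * op e from rfl, mul_smul, hu.op_smul_e]
  rw [h1, mul_smul]
  congr 1
  rw [smul_comm, hu.smul_e]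

omit [SMulCommClass A Aᵐᵒᵖ X] in
lemma tmk_congr_left {a a' : A} (b : A) (h : a * e = a' * e) :
    tmk A e u a b = tmk A e u a' b := by unfold tmk; rw [h]

omit [SMulCommClass A Aᵐᵒᵖ X] in
lemma smul_tmk (a' a b : A) : a' • tmk A e u a b = tmk A e u (a' * a) b := by
  unfold tmk; rw [smul_smul, ← mul_assoc]

lemma op_smul_tmk (b' a b : A) : op b' • tmk A e u a b = tmk A e u a (b * b') := by
  unfold tmk
  rw [← smul_comm (a*e) (op b')]
  congr 1
  rw [smul_smul, ← MulOpposite.op_mul, mul_assoc]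

/-- Generators of (a model of) `Ae ⊗ eA`. -/
def genSet {X : Type u} [AddCommGroup X] [Module A X] [Module Aᵐᵒᵖ X] (u : X) : Set X :=
  {x | ∃ a b : A, x = a • (op b • u)}

lemma gen_top (hu : IsAeTensor A e X u) (x : X) :
    x ∈ AddSubgroup.closure (genSet (A := A) u) := by
  set T := AddSubgroup.closure (genSet (A := A) u) with hT
  have hsm : ∀ (a : A) (y : X), y ∈ T → a • y ∈ T := by
    intro a y hy
    refine AddSubgroup.closure_induction ?_ ?_ ?_ ?_ hy
    · rintro z ⟨a', b', rfl⟩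
      exact AddSubgroup.subset_closure ⟨a * a', b', smul_smul a a' _⟩
    · rw [smul_zero]; exact T.zero_mem
    · intro z w _ _ hz hw; rw [smul_add]; exact T.add_mem hz hw
    · intro z _ hz; rw [smul_neg]; exact T.neg_mem hz
  have hop : ∀ (a : Aᵐᵒᵖ) (y : X), y ∈ T → a • y ∈ T := by
    intro a y hy
    refine AddSubgroup.closure_induction ?_ ?_ ?_ ?_ hy
    · rintro z ⟨a', b', rfl⟩
      refine AddSubgroup.subset_closure ⟨a', b' * a.unop, ?_⟩
      rw [← smul_comm a' a, smul_smul]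
      rfl
    · rw [smul_zero]; exact T.zero_mem
    · intro z w _ _ hz hw; rw [smul_add]; exact T.add_mem hz hw
    · intro z _ hz; rw [smul_neg]; exact T.neg_mem hz
  letI : SMul A ↥T := ⟨fun a y => ⟨a • y.1, hsm a y.1 y.2⟩⟩
  letI : SMul Aᵐᵒᵖ ↥T := ⟨fun a y => ⟨a • y.1, hop a y.1 y.2⟩⟩
  letI : Module A ↥T :=
    Function.Injective.module A T.subtype Subtype.coe_injective (fun _ _ => rfl)
  letI : Module Aᵐᵒᵖ ↥T :=
    Function.Injective.module Aᵐᵒᵖ T.subtype Subtype.coe_injective (fun _ _ => rfl)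
  letI : SMulCommClass A Aᵐᵒᵖ ↥T := ⟨fun a b y => Subtype.ext (smul_comm a b y.1)⟩
  have humem : u ∈ T :=
    AddSubgroup.subset_closure ⟨e, e, by rw [hu.op_smul_e, hu.smul_e]⟩
  obtain ⟨g, ⟨hg, hgu⟩, -⟩ :=
    hu.universal ⟨↥T⟩ ⟨u, humem⟩ (Subtype.ext hu.smul_e) (Subtype.ext hu.op_smul_e)
      (fun a => Subtype.ext (hu.balance a))
  obtain ⟨g0, _, huniq⟩ := hu.universal ⟨X⟩ u hu.smul_e hu.op_smul_e hu.balance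
  have h1 : (fun y => (g y).1) = g0 := by
    refine huniq _ ⟨⟨fun y z => ?_, fun a y => ?_, fun a y => ?_⟩, ?_⟩
    · simp only [hg.1 y z]; rfl
    · simp only [hg.2.1 a y]; rfl
    · simp only [hg.2.2 a y]; rfl
    · show (g u).1 = u; rw [hgu]
  have h2 : (id : X → X) = g0 :=
    huniq _ ⟨⟨fun _ _ => rfl, fun _ _ => rfl, fun _ _ => rfl⟩, rfl⟩
  have : (fun y => (g y).1) = id := h1.trans h2.symm
  have hx : (g x).1 = x := congrFun this x
  rw [← hx]
  exact (g x).2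

lemma endo_eq_id (hu : IsAeTensor A e X u) {g : X → X} (hg : IsBimodHom A g) (hgu : g u = u) :
    g = id := by
  obtain ⟨g0, _, huniq⟩ := hu.universal ⟨X⟩ u hu.smul_e hu.op_smul_e hu.balance
  rw [huniq g ⟨hg, hgu⟩, huniq id ⟨⟨fun _ _ => rfl, fun _ _ => rfl, fun _ _ => rfl⟩, rfl⟩]

omit [SMulCommClass A Aᵐᵒᵖ X] in
lemma mu_tmk (he : IsIdempotentElem e) {μ : X → A} (hμ : IsBimodHom A μ) (hμu : μ u = e)
    (a b : A) : μ (tmk A e u a b) = a * e * b := by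
  unfold tmk
  rw [hμ.2.1, hμ.2.2, hμu]
  simp only [MulOpposite.smul_eq_mul_unop, unop_op, smul_eq_mul]
  rw [← mul_assoc e e b, he.eq, ← mul_assoc, mul_assoc a e e, he.eq]

lemma struct_lemma (hu : IsAeTensor A e X u) (he : IsIdempotentElem e)
    {μ : X → A} (hμ : IsBimodHom A μ) (hμu : μ u = e)
    {v : X} (h1 : e • v = v) (h2 : op e • v = v)
    (h3 : ∀ a : A, (e * a * e) • v = op (e * a * e) • v) :
    μ v ∈ centerCorner A e ∧ v = (μ v) • u := by
  have ee : ∀ x : A, e * (e * x) = e * x := fun x => by rw [← mul_assoc, he.eq]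
  have key : ∀ x : X, e • (op e • x) = (e * μ x * e) • u := by
    intro x
    refine AddSubgroup.closure_induction ?_ ?_ ?_ ?_ (gen_top hu x)
    · rintro z ⟨a, b, rfl⟩
      rw [← tmk_eq_smul hu a b, mu_tmk he hμ hμu, op_smul_tmk, smul_tmk]
      unfold tmk
      have hb : op (e * (b * e)) • u = (e * b * e) • u := by
        rw [← mul_assoc]; exact (hu.balance b).symm
      rw [hb, smul_smul]
      congr 1
      simp only [mul_assoc, ee]
    · rw [smul_zero, smul_zero, bhom_zero hμ, mul_zero, zero_mul, zero_smul]
    · intro y z _ _ hy hz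
      rw [smul_add, smul_add, hy, hz, hμ.1 y z, mul_add, add_mul, add_smul]
    · intro y _ hy
      rw [smul_neg, smul_neg, hy, bhom_neg hμ, mul_neg, neg_mul, neg_smul]
  have hv := key v
  rw [h2, h1] at hv
  have hz : μ v = e * μ v * e := by
    conv_lhs => rw [hv]
    rw [hμ.2.1, hμu, smul_eq_mul, mul_assoc (e * μ v) e e, he.eq]
  have hc : ∀ a : A, μ v * (e * a * e) = (e * a * e) * μ v := by
    intro a
    have h := congrArg μ (h3 a)
    rw [hμ.2.1, hμ.2.2] at h
    simp only [MulOpposite.smul_eq_mul_unop, unop_op, smul_eq_mul] at h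
    exact h.symm
  refine ⟨⟨hz, hc⟩, ?_⟩
  rw [← hz] at hv
  exact hv

lemma cc_smul_eq_op (hu : IsAeTensor A e X u) {z : A} (hz : z ∈ centerCorner A e) :
    z • u = op z • u := by
  have h := hu.balance z
  rw [← hz.1] at h
  exact h

lemma tmk_slide (hu : IsAeTensor A e X u) {z : A} (hz : z ∈ centerCorner A e) (a b : A) :
    tmk A e u (a * z) b = tmk A e u a (z * b) := by
  rw [tmk_eq_smul hu, tmk_eq_smul hu, mul_smul]
  congr 1
  rw [smul_comm z (op b), cc_smul_eq_op hu hz, smul_smul, ← MulOpposite.op_mul]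

lemma exists_mu (hu : IsAeTensor A e X u) (he : IsIdempotentElem e) :
    ∃ μ : X → A, IsBimodHom A μ ∧ μ u = e := by
  have ee : ∀ x : A, e * (e * x) = e * x := fun x => by rw [← mul_assoc, he.eq]
  obtain ⟨μ, hμ, -⟩ := hu.universal (ABimod A) e (show e * e = e from he.eq)
    (show e * e = e from he.eq)
    (fun a => show (e * a * e) * e = e * (e * a * e) by simp only [mul_assoc, he.eq, ee])
  exact ⟨μ, hμ⟩

lemma hom_tmk {X2 : Type u} [AddCommGroup X2] [Module A X2] [Module Aᵐᵒᵖ X2]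
    [SMulCommClass A Aᵐᵒᵖ X2] {u2 : X2} (hu : IsAeTensor A e X u)
    (hu2 : IsAeTensor A e X2 u2)
    {ψ : X → X2} (hψ : IsBimodHom A ψ) {z : A} (hz : z ∈ centerCorner A e)
    (hψu : ψ u = z • u2) (a b : A) :
    ψ (tmk A e u a b) = tmk A e u2 (a * z) b := by
  rw [tmk_eq_smul hu, hψ.2.1, hψ.2.2, hψu, tmk_eq_smul hu2, ← smul_comm z (op b), smul_smul]

lemma prod_ext {X2 : Type u} [AddCommGroup X2] [Module A X2] [Module Aᵐᵒᵖ X2]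
    [SMulCommClass A Aᵐᵒᵖ X2] {R1 R2 : Type u} [Ring R1] [Ring R2]
    (hu : IsAeTensor A e X u)
    (f : X →+ R1) (f2 : X2 →+ R2) {ψ : X → X2} (hψ : IsBimodHom A ψ)
    (P : ∀ a b a' b' : A, ∃ y : X,
      f (tmk A e u a b) * f (tmk A e u a' b') = f y ∧
      f2 (ψ (tmk A e u a b)) * f2 (ψ (tmk A e u a' b')) = f2 (ψ y))
    (x x' : X) :
    ∃ y : X, f x * f x' = f y ∧ f2 (ψ x) * f2 (ψ x') = f2 (ψ y) := by
  have base : ∀ (a b : A) (w : X), ∃ y, f (tmk A e u a b) * f w = f y ∧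
      f2 (ψ (tmk A e u a b)) * f2 (ψ w) = f2 (ψ y) := by
    intro a b w
    refine AddSubgroup.closure_induction ?_ ?_ ?_ ?_ (gen_top hu w)
    · rintro w' ⟨a', b', rfl⟩
      rw [← tmk_eq_smul hu]
      exact P a b a' b'
    · exact ⟨0, by rw [map_zero, mul_zero],
        by rw [bhom_zero hψ, map_zero, mul_zero]⟩
    · rintro w1 w2 _ _ ⟨y1, hy1, hy1'⟩ ⟨y2, hy2, hy2'⟩
      refine ⟨y1 + y2, by rw [map_add, mul_add, hy1, hy2, map_add], ?_⟩
      rw [hψ.1, map_add, mul_add, hy1', hy2', ← map_add, ← hψ.1]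
    · rintro w1 _ ⟨y1, hy1, hy1'⟩
      refine ⟨-y1, by rw [map_neg, mul_neg, hy1, map_neg], ?_⟩
      rw [bhom_neg hψ, map_neg, mul_neg, hy1', ← map_neg, ← bhom_neg hψ]
  refine AddSubgroup.closure_induction ?_ ?_ ?_ ?_ (gen_top hu x)
  · rintro w ⟨a', b', rfl⟩
    rw [← tmk_eq_smul hu]
    exact base a' b' x'
  · exact ⟨0, by rw [map_zero, zero_mul],
      by rw [bhom_zero hψ, map_zero, zero_mul]⟩
  · rintro w1 w2 _ _ ⟨y1, hy1, hy1'⟩ ⟨y2, hy2, hy2'⟩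
    refine ⟨y1 + y2, by rw [map_add, add_mul, hy1, hy2, map_add], ?_⟩
    rw [hψ.1, map_add, add_mul, hy1', hy2', ← map_add, ← hψ.1]
  · rintro w1 _ ⟨y1, hy1, hy1'⟩
    refine ⟨-y1, by rw [map_neg, neg_mul, hy1, map_neg], ?_⟩
    rw [bhom_neg hψ, map_neg, neg_mul, hy1', ← map_neg, ← bhom_neg hψ]

lemma slot_eq (he : IsIdempotentElem e) {vv : A} (hvv : vv ∈ centerCorner A e)
    (b c b' : A) : (b * vv * e * c * b') * e = (b * e * c * b' * vv) * e := by
  have hve : vv * e = vv := cc_mul_e he hvv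
  have hev : e * vv = vv := cc_e_mul he hvv
  have h := hvv.2 (c * b')
  calc (b * vv * e * c * b') * e
      = b * (vv * (e * (c * b') * e)) := by simp only [mul_assoc]
    _ = b * ((e * (c * b') * e) * vv) := by rw [h]
    _ = (b * e * c * b' * vv) * e := by simp only [mul_assoc]; rw [hev, hve]

end Model



end Aux

/-- For `λ₁, λ₂ ∈ Z(eAe)`, the mirror-reflective algebras
`R(A, e, λ₁)` and `R(A, e, λ₂)` are isomorphic as idealized extensions of `A` by
`Ae ⊗_{eAe} eA` if and only if `λ₂ = λ₁ · u` for some invertible element `u` of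
`Z(eAe)`. -/
theorem mirror_reflective_iso_iff_unit
    (e : A) (he : IsIdempotentElem e)
    (lam1 lam2 : A) (h1 : lam1 ∈ centerCorner A e) (h2 : lam2 ∈ centerCorner A e)
    (R1 R2 : Type u) [Ring R1] [Algebra k R1] [Ring R2] [Algebra k R2]
    (D1 : MirrorData k A e lam1 R1) (D2 : MirrorData k A e lam2 R2) :
    (∃ φ : R1 ≃ₐ[k] R2, (∀ a : A, φ (D1.emb a) = D2.emb a) ∧
        Set.range (fun x : D1.X => φ (D1.embX x)) = Set.range D2.embX) ↔
      ∃ uu ∈ centerCorner A e, (∃ vv ∈ centerCorner A e, uu * vv = e ∧ vv * uu = e) ∧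
        lam2 = lam1 * uu := by
  letI := D1.addX; letI := D1.modL; letI := D1.modR; letI := D1.scc
  letI := D2.addX; letI := D2.modL; letI := D2.modR; letI := D2.scc
  have hu1 := D1.tensor
  have hu2 := D2.tensor
  have hinj1 : Function.Injective D1.embX := by
    intro x y hxy
    have h : (fun p : A × D1.X => D1.emb p.1 + D1.embX p.2) (0, x) =
        (fun p : A × D1.X => D1.emb p.1 + D1.embX p.2) (0, y) := by
      show D1.emb 0 + D1.embX x = D1.emb 0 + D1.embX y
      rw [hxy]
    exact congrArg Prod.snd (D1.bij.1 h)
  have hinj2 : Function.Injective D2.embX := by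
    intro x y hxy
    have h : (fun p : A × D2.X => D2.emb p.1 + D2.embX p.2) (0, x) =
        (fun p : A × D2.X => D2.emb p.1 + D2.embX p.2) (0, y) := by
      show D2.emb 0 + D2.embX x = D2.emb 0 + D2.embX y
      rw [hxy]
    exact congrArg Prod.snd (D2.bij.1 h)
  obtain ⟨μ1, hμ1, hμ1u⟩ := exists_mu hu1 he
  obtain ⟨μ2, hμ2, hμ2u⟩ := exists_mu hu2 he
  have el1 : e * lam1 = lam1 := cc_e_mul he h1
  have l1e : lam1 * e = lam1 := cc_mul_e he h1
  have el2 : e * lam2 = lam2 := cc_e_mul he h2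
  have l2e : lam2 * e = lam2 := cc_mul_e he h2
  constructor
  · rintro ⟨φ, hφA, hφX⟩
    -- transfer to a bimodule isomorphism ψ : X1 → X2
    have hmem : ∀ x : D1.X, ∃ y, D2.embX y = φ (D1.embX x) := by
      intro x
      have h : φ (D1.embX x) ∈ Set.range D2.embX := by
        rw [← hφX]; exact ⟨x, rfl⟩
      exact h
    choose ψ hψs using hmem
    have hmem' : ∀ y : D2.X, ∃ x, D1.embX x = φ.symm (D2.embX y) := by
      intro y
      have h : D2.embX y ∈ Set.range (fun x : D1.X => φ (D1.embX x)) := by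
        rw [hφX]; exact ⟨y, rfl⟩
      obtain ⟨x, hx⟩ := h
      exact ⟨x, by rw [← hx, AlgEquiv.symm_apply_apply]⟩
    choose ψ' hψ's using hmem'
    have hcomp1 : ∀ x, ψ' (ψ x) = x := by
      intro x; apply hinj1
      rw [hψ's, hψs, AlgEquiv.symm_apply_apply]
    have hcomp2 : ∀ y, ψ (ψ' y) = y := by
      intro y; apply hinj2
      rw [hψs, hψ's, AlgEquiv.apply_symm_apply]
    have hφA' : ∀ a : A, φ.symm (D2.emb a) = D1.emb a := by
      intro a; rw [← hφA, AlgEquiv.symm_apply_apply]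
    have hψhom : IsBimodHom A ψ := by
      refine ⟨fun x y => ?_, fun a x => ?_, fun a x => ?_⟩
      · apply hinj2; rw [map_add, hψs, hψs, hψs, map_add, map_add]
      · apply hinj2
        rw [hψs, ← D1.left_compat, map_mul, hφA, ← hψs, D2.left_compat]
      · apply hinj2
        rw [hψs, ← MulOpposite.op_unop a, ← D1.right_compat, map_mul, hφA, ← hψs,
          D2.right_compat]
    have hψ'hom : IsBimodHom A ψ' := by
      refine ⟨fun x y => ?_, fun a x => ?_, fun a x => ?_⟩
      · apply hinj1; rw [map_add, hψ's, hψ's, hψ's, map_add, map_add]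
      · apply hinj1
        rw [hψ's, ← D2.left_compat, map_mul, hφA', ← hψ's, D1.left_compat]
      · apply hinj1
        rw [hψ's, ← MulOpposite.op_unop a, ← D2.right_compat, map_mul, hφA', ← hψ's,
          D1.right_compat]
    -- ψ u1 = z • u2 with z central
    have hw1 : e • ψ D1.u = ψ D1.u := by rw [← hψhom.2.1, hu1.smul_e]
    have hw2 : op e • ψ D1.u = ψ D1.u := by rw [← hψhom.2.2, hu1.op_smul_e]
    have hw3 : ∀ a : A, (e * a * e) • ψ D1.u = op (e * a * e) • ψ D1.u := fun a => by
      rw [← hψhom.2.1, ← hψhom.2.2, hu1.balance]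
    obtain ⟨hzc, hzu⟩ := struct_lemma hu2 he hμ2 hμ2u hw1 hw2 hw3
    set z := μ2 (ψ D1.u) with hzdef
    have hw1' : e • ψ' D2.u = ψ' D2.u := by rw [← hψ'hom.2.1, hu2.smul_e]
    have hw2' : op e • ψ' D2.u = ψ' D2.u := by rw [← hψ'hom.2.2, hu2.op_smul_e]
    have hw3' : ∀ a : A, (e * a * e) • ψ' D2.u = op (e * a * e) • ψ' D2.u := fun a => by
      rw [← hψ'hom.2.1, ← hψ'hom.2.2, hu2.balance]
    obtain ⟨hz'c, hz'u⟩ := struct_lemma hu1 he hμ1 hμ1u hw1' hw2' hw3'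
    set z' := μ1 (ψ' D2.u) with hz'def
    -- z z' = e and z' z = e
    have hzz' : z * z' = e := by
      have h : D1.u = (z * z') • D1.u := by
        conv_lhs => rw [← hcomp1 D1.u, hzu]
        rw [hψ'hom.2.1, hz'u, smul_smul]
      have h2 := congrArg μ1 h
      rw [hμ1u, hμ1.2.1, hμ1u, smul_eq_mul, mul_assoc, cc_mul_e he hz'c] at h2
      exact h2.symm
    have hz'z : z' * z = e := by
      have h : D2.u = (z' * z) • D2.u := by
        conv_lhs => rw [← hcomp2 D2.u, hz'u]
        rw [hψhom.2.1, hzu, smul_smul]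
      have h2 := congrArg μ2 h
      rw [hμ2u, hμ2.2.1, hμ2u, smul_eq_mul, mul_assoc, cc_mul_e he hzc] at h2
      exact h2.symm
    have ez : e * z = z := cc_e_mul he hzc
    have ze : z * e = z := cc_mul_e he hzc
    have r1 : ∀ w : A, e * (e * w) = e * w := fun w => by rw [← mul_assoc, he.eq]
    have r2 : ∀ w : A, e * (z * w) = z * w := fun w => by rw [← mul_assoc, ez]
    have r3 : ∀ w : A, z * (e * w) = z * w := fun w => by rw [← mul_assoc, ze]
    -- the lambda relation
    have hmul := congrArg φ (D1.mul_X e e e e)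
    rw [map_mul, ← hψs, ← hψs, hom_tmk hu1 hu2 hψhom hzc hzu,
      hom_tmk hu1 hu2 hψhom hzc hzu, D2.mul_X] at hmul
    have heq := hinj2 hmul
    have hring := congrArg μ2 heq
    rw [mu_tmk he hμ2 hμ2u, mu_tmk he hμ2 hμ2u] at hring
    simp only [mul_assoc, r1, r2, r3, el1, l1e, el2, l2e] at hring
    -- hring : z * (z * lam2) = z * lam1
    have t1 : z * lam2 = lam1 := by
      have h : z' * (z * (z * lam2)) = z' * (z * lam1) := by rw [hring]
      rw [← mul_assoc z' z (z * lam2), hz'z, r2, ← mul_assoc z' z lam1, hz'z, el1] at h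
      exact h
    have t2 : lam2 = lam1 * z' := by
      have h : z' * (z * lam2) = z' * lam1 := by rw [t1]
      rw [← mul_assoc, hz'z, el2] at h
      rw [h, cc_comm hz'c h1]
    exact ⟨z', hz'c, ⟨z, hzc, hz'z, hzz'⟩, t2⟩
  · rintro ⟨uu, huu, ⟨vv, hvv, huv, hvu⟩, hlam⟩
    -- build bimodule maps ψ, ψ'
    have c1 : e • (vv • D2.u) = vv • D2.u := by rw [smul_smul, cc_e_mul he hvv]
    have c2 : op e • (vv • D2.u) = vv • D2.u := by
      rw [← smul_comm vv (op e), hu2.op_smul_e]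
    have c3 : ∀ a : A, (e * a * e) • (vv • D2.u) = op (e * a * e) • (vv • D2.u) := fun a => by
      rw [smul_smul, ← hvv.2 a, mul_smul, hu2.balance]
      exact smul_comm vv (op (e * a * e)) D2.u
    obtain ⟨ψ, ⟨hψhom, hψu⟩, -⟩ := hu1.universal ⟨D2.X⟩ (vv • D2.u) c1 c2 c3
    have c1' : e • (uu • D1.u) = uu • D1.u := by rw [smul_smul, cc_e_mul he huu]
    have c2' : op e • (uu • D1.u) = uu • D1.u := by
      rw [← smul_comm uu (op e), hu1.op_smul_e]
    have c3' : ∀ a : A, (e * a * e) • (uu • D1.u) = op (e * a * e) • (uu • D1.u) := fun a => by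
      rw [smul_smul, ← huu.2 a, mul_smul, hu1.balance]
      exact smul_comm uu (op (e * a * e)) D1.u
    obtain ⟨ψ', ⟨hψ'hom, hψ'u⟩, -⟩ := hu2.universal ⟨D1.X⟩ (uu • D1.u) c1' c2' c3'
    have hcomphom1 : IsBimodHom A (fun x : D1.X => ψ' (ψ x)) :=
      ⟨fun x y => by simp only [hψhom.1, hψ'hom.1],
       fun a x => by simp only [hψhom.2.1, hψ'hom.2.1],
       fun a x => by simp only [hψhom.2.2, hψ'hom.2.2]⟩
    have hcomphom2 : IsBimodHom A (fun y : D2.X => ψ (ψ' y)) :=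
      ⟨fun x y => by simp only [hψ'hom.1, hψhom.1],
       fun a x => by simp only [hψ'hom.2.1, hψhom.2.1],
       fun a x => by simp only [hψ'hom.2.2, hψhom.2.2]⟩
    have hcomp1 : ∀ x, ψ' (ψ x) = x := by
      have h := endo_eq_id hu1 hcomphom1 (by
        rw [hψu, hψ'hom.2.1, hψ'u, smul_smul, hvu, hu1.smul_e])
      intro x; exact congrFun h x
    have hcomp2 : ∀ y, ψ (ψ' y) = y := by
      have h := endo_eq_id hu2 hcomphom2 (by
        rw [hψ'u, hψhom.2.1, hψu, smul_smul, huv, hu2.smul_e])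
      intro y; exact congrFun h y
    have hψbij : Function.Bijective ψ :=
      ⟨Function.LeftInverse.injective hcomp1, Function.RightInverse.surjective hcomp2⟩
    -- key generator-level multiplicativity
    have hvl : vv * lam2 = lam1 := by
      rw [hlam, ← mul_assoc, cc_comm hvv h1, mul_assoc, hvu, cc_mul_e he h1]
    have hgen : ∀ b c b' c' : A, ∃ y : D1.X,
        D1.embX (tmk A e D1.u b c) * D1.embX (tmk A e D1.u b' c') = D1.embX y ∧
        D2.embX (ψ (tmk A e D1.u b c)) * D2.embX (ψ (tmk A e D1.u b' c')) =
          D2.embX (ψ y) := by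
      intro b c b' c'
      refine ⟨tmk A e D1.u (b * e * c * b') (lam1 * c'), D1.mul_X b c b' c', ?_⟩
      rw [hom_tmk hu1 hu2 hψhom hvv hψu, hom_tmk hu1 hu2 hψhom hvv hψu,
        hom_tmk hu1 hu2 hψhom hvv hψu, D2.mul_X]
      congr 1
      rw [show b * vv * e * c * (b' * vv) = b * vv * e * c * b' * vv from
        (mul_assoc _ b' vv).symm, tmk_slide hu2 hvv,
        show vv * (lam2 * c') = lam1 * c' from by rw [← mul_assoc, hvl]]
      exact tmk_congr_left (lam1 * c') (slot_eq he hvv b c b')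
    have prodX := prod_ext hu1 D1.embX D2.embX hψhom hgen
    choose pmul hp1 hp2 using prodX
    -- the equivalences with A × X
    let E1 : A × D1.X ≃ R1 := Equiv.ofBijective _ D1.bij
    let E2 : A × D2.X ≃ R2 := Equiv.ofBijective _ D2.bij
    let φ0 : R1 → R2 := fun r => D2.emb (E1.symm r).1 + D2.embX (ψ (E1.symm r).2)
    have hE1 : ∀ (a : A) (x : D1.X), E1.symm (D1.emb a + D1.embX x) = (a, x) := by
      intro a x
      have h : E1 (a, x) = D1.emb a + D1.embX x := rfl
      rw [← h, Equiv.symm_apply_apply]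
    have hφ0 : ∀ (a : A) (x : D1.X),
        φ0 (D1.emb a + D1.embX x) = D2.emb a + D2.embX (ψ x) := by
      intro a x
      show D2.emb (E1.symm (D1.emb a + D1.embX x)).1 +
        D2.embX (ψ (E1.symm (D1.emb a + D1.embX x)).2) = _
      rw [hE1]
    have hdecomp : ∀ r : R1, r = D1.emb (E1.symm r).1 + D1.embX (E1.symm r).2 :=
      fun r => (E1.apply_symm_apply r).symm
    have hmul0 : ∀ r r', φ0 (r * r') = φ0 r * φ0 r' := by
      intro r r'
      obtain ⟨a, x, hr⟩ : ∃ a x, r = D1.emb a + D1.embX x := ⟨_, _, hdecomp r⟩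
      obtain ⟨a', x', hr'⟩ : ∃ a x, r' = D1.emb a + D1.embX x := ⟨_, _, hdecomp r'⟩
      have hexp : (D1.emb a + D1.embX x) * (D1.emb a' + D1.embX x') =
          D1.emb (a * a') + D1.embX (a • x' + (op a' • x + pmul x x')) := by
        rw [add_mul, mul_add, mul_add, ← map_mul, D1.left_compat, D1.right_compat,
          hp1, map_add, map_add, add_assoc]
      have hexp2 : (D2.emb a + D2.embX (ψ x)) * (D2.emb a' + D2.embX (ψ x')) =
          D2.emb (a * a') + D2.embX (ψ (a • x' + (op a' • x + pmul x x'))) := by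
        rw [add_mul, mul_add, mul_add, ← map_mul, D2.left_compat, D2.right_compat,
          hp2, hψhom.1, hψhom.1, hψhom.2.1, hψhom.2.2, map_add, map_add, add_assoc]
      rw [hr, hr', hexp, hφ0, hφ0, hφ0, hexp2]
    have hadd0 : ∀ r r', φ0 (r + r') = φ0 r + φ0 r' := by
      intro r r'
      obtain ⟨a, x, hr⟩ : ∃ a x, r = D1.emb a + D1.embX x := ⟨_, _, hdecomp r⟩
      obtain ⟨a', x', hr'⟩ : ∃ a x, r' = D1.emb a + D1.embX x := ⟨_, _, hdecomp r'⟩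
      have hexp : (D1.emb a + D1.embX x) + (D1.emb a' + D1.embX x') =
          D1.emb (a + a') + D1.embX (x + x') := by
        rw [map_add, map_add]; abel
      rw [hr, hr', hexp, hφ0, hφ0, hφ0, hψhom.1, map_add, map_add]
      abel
    have hone0 : φ0 1 = 1 := by
      have h : (1 : R1) = D1.emb 1 + D1.embX 0 := by rw [map_one, map_zero, add_zero]
      rw [h, hφ0, bhom_zero hψhom, map_zero, add_zero, map_one]
    have hzero0 : φ0 0 = 0 := by
      have h : (0 : R1) = D1.emb 0 + D1.embX 0 := by rw [map_zero, map_zero, add_zero]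
      rw [h, hφ0, bhom_zero hψhom, map_zero, map_zero, add_zero]
    have hcomm0 : ∀ c : k, φ0 (algebraMap k R1 c) = algebraMap k R2 c := by
      intro c
      have h : algebraMap k R1 c = D1.emb (algebraMap k A c) + D1.embX 0 := by
        rw [D1.emb.commutes, map_zero, add_zero]
      rw [h, hφ0, bhom_zero hψhom, map_zero, add_zero, D2.emb.commutes]
    let Φ : R1 →ₐ[k] R2 :=
      { toFun := φ0, map_one' := hone0, map_mul' := hmul0,
        map_zero' := hzero0, map_add' := hadd0, commutes' := hcomm0 }
    have hbij : Function.Bijective φ0 := by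
      refine Function.bijective_iff_has_inverse.mpr
        ⟨fun r => E1 ((E2.symm r).1, ψ' ((E2.symm r).2)), fun r => ?_, fun r => ?_⟩
      · show E1 ((E2.symm (E2 ((E1.symm r).1, ψ (E1.symm r).2))).1,
          ψ' ((E2.symm (E2 ((E1.symm r).1, ψ (E1.symm r).2))).2)) = r
        rw [Equiv.symm_apply_apply, hcomp1]
        exact E1.apply_symm_apply r
      · show E2 ((E1.symm (E1 ((E2.symm r).1, ψ' (E2.symm r).2))).1,
          ψ (E1.symm (E1 ((E2.symm r).1, ψ' (E2.symm r).2))).2) = r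
        rw [Equiv.symm_apply_apply, hcomp2]
        exact E2.apply_symm_apply r
    refine ⟨AlgEquiv.ofBijective Φ hbij, fun a => ?_, ?_⟩
    · show φ0 (D1.emb a) = D2.emb a
      have h : D1.emb a = D1.emb a + D1.embX 0 := by rw [map_zero, add_zero]
      rw [h, hφ0, bhom_zero hψhom, map_zero, add_zero]
    · have h : (fun x : D1.X => (AlgEquiv.ofBijective Φ hbij) (D1.embX x)) =
          fun x => D2.embX (ψ x) := by
        funext x
        show φ0 (D1.embX x) = D2.embX (ψ x)
        have h0 : D1.embX x = D1.emb 0 + D1.embX x := by rw [map_zero, zero_add]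
        rw [h0, hφ0, map_zero, zero_add]
      rw [h]
      ext r
      constructor
      · rintro ⟨x, hx⟩; exact ⟨ψ x, hx⟩
      · rintro ⟨y, hy⟩
        exact ⟨ψ' y, by show D2.embX (ψ (ψ' y)) = r; rw [hcomp2]; exact hy⟩



end Paper
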